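/- Let X be a metric space written as X = Y_∞ ∪ ⋃_{n∈ℕ} Y_n (a convergent Y-space): each Y_n is homeomorphic to Y_∞ via f_n : Y_∞ → Y_n, there is a finite set of 'identification points' y with f_n(y) = y for all n, the images f_n(y), f_m(y') are pairwise distinct otherwise, and dist(f_n(y), y) → 0 uniformly in y. Assume Y_∞ is a finite (hence compact) CW-complex. Then each identification point P has a relatively open neighbourhood U = U' ∪ ⋃_n f_n(U') in X (where U' is a deformation-retractible neighbourhood of P in Y_∞) that deformation retracts onto {P} within X, with the retraction defined layerwise by r_t(x) = f_i(r'_t(f_i^{-1}(x))) for x ∈ f_i(U'). -/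

import Mathlib

open Set

private lemma exists_pos_forall_of_lt (N : ℕ) (Q : ℕ → ℝ → Prop)
    (mono : ∀ n, ∀ δ δ' : ℝ, δ' ≤ δ → Q n δ → Q n δ')
    (h : ∀ n < N, ∃ δ > 0, Q n δ) : ∃ δ > 0, ∀ n < N, Q n δ := by
  induction N with
  | zero => exact ⟨1, one_pos, fun n hn => absurd hn (Nat.not_lt_zero n)⟩
  | succ N ih =>
    obtain ⟨δ1, hδ1, h1⟩ := ih (fun n hn => h n (hn.trans (Nat.lt_succ_self N)))
    obtain ⟨δ2, hδ2, h2⟩ := h N (Nat.lt_succ_self N)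
    refine ⟨min δ1 δ2, lt_min hδ1 hδ2, fun n hn => ?_⟩
    rcases Nat.lt_succ_iff_lt_or_eq.mp hn with h' | rfl
    · exact mono n δ1 _ (min_le_left _ _) (h1 n h')
    · exact mono n δ2 _ (min_le_right _ _) h2

private lemma cwa_prod_iff {X : Type} [MetricSpace X] {F : X × ℝ → X} {s : Set X}
    {s2 : Set ℝ} {a : X} {b : ℝ} :
    ContinuousWithinAt F (s ×ˢ s2) (a, b) ↔
      ∀ ε > 0, ∃ δ > 0, ∀ z ∈ s, ∀ u ∈ s2, dist z a < δ → dist u b < δ →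
        dist (F (z, u)) (F (a, b)) < ε := by
  rw [Metric.continuousWithinAt_iff]
  constructor
  · intro h ε hε
    obtain ⟨δ, hδ, h'⟩ := h ε hε
    refine ⟨δ, hδ, fun z hz u hu h1 h2 => ?_⟩
    exact h' (Set.mk_mem_prod hz hu) (by rw [Prod.dist_eq]; exact max_lt h1 h2)
  · intro h ε hε
    obtain ⟨δ, hδ, h'⟩ := h ε hε
    refine ⟨δ, hδ, fun x hx hd => ?_⟩
    rw [Prod.dist_eq] at hd
    exact h' x.1 hx.1 x.2 hx.2 (lt_of_le_of_lt (le_max_left _ _) hd)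
      (lt_of_le_of_lt (le_max_right _ _) hd)

open scoped Classical in
private noncomputable def myR {X : Type} [Nonempty X] (f : ℕ → X → X) (Yinf U' : Set X)
    (r' : X → ℝ → X) (p : X) (x : X) (t : ℝ) : X :=
  if x ∈ U' then r' x t
  else if h : ∃ n, x ∈ f n '' U' then
    f h.choose (r' (Function.invFunOn (f h.choose) Yinf x) t)
  else p

theorem convergentYSpace_identification_point_retractible_nbhd
    (X : Type) [MetricSpace X]
    (Yinf : Set X) (Y : ℕ → Set X)
    (hcover : Yinf ∪ (⋃ n, Y n) = univ)
    (hYinfCompact : IsCompact Yinf) (hYinfClosed : IsClosed Yinf)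
    (f : ℕ → X → X)
    (hmaps : ∀ n, Set.BijOn (f n) Yinf (Y n))
    (hembed : ∀ n, Topology.IsEmbedding (Yinf.restrict (f n)))
    (P : Finset X) (hP : (P : Set X) ⊆ Yinf)
    (hfixP : ∀ (n : ℕ) (x : X), x ∈ Yinf → (f n x = x ↔ x ∈ P))
    (hdisj1 : ∀ (n : ℕ) (x : X), x ∈ Yinf → x ∉ (P : Set X) →
      ∀ y ∈ Yinf, f n x ≠ y)
    (hdisj2 : ∀ (n m : ℕ), n ≠ m → ∀ x ∈ Yinf, x ∉ (P : Set X) →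
      ∀ y ∈ Yinf, f n x ≠ f m y)
    (hunif : ∀ ε : ℝ, 0 < ε → ∃ N : ℕ, ∀ n ≥ N, ∀ x ∈ Yinf, dist (f n x) x < ε)
    (p : X) (hpP : p ∈ P)
    (U' : Set X) (hU'sub : U' ⊆ Yinf) (hpU' : p ∈ U')
    (hU'open : ∃ V : Set X, IsOpen V ∧ U' = V ∩ Yinf)
    (hU'P : (P : Set X) ∩ U' = {p})
    (r' : X → ℝ → X)
    (hr'cont : ContinuousOn (fun q : X × ℝ => r' q.1 q.2) (U' ×ˢ Icc (0:ℝ) 1))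
    (hr'into : ∀ x ∈ U', ∀ t ∈ Icc (0:ℝ) 1, r' x t ∈ U')
    (hr'one : ∀ x ∈ U', r' x 1 = x)
    (hr'zero : ∀ x ∈ U', r' x 0 = p)
    (hr'p : ∀ t ∈ Icc (0:ℝ) 1, r' p t = p) :
    p ∈ U' ∪ ⋃ n, f n '' U' ∧
    IsOpen (U' ∪ ⋃ n, f n '' U') ∧
    ∃ r : X → ℝ → X,
      ContinuousOn (fun q : X × ℝ => r q.1 q.2) ((U' ∪ ⋃ n, f n '' U') ×ˢ Icc (0:ℝ) 1) ∧
      (∀ x ∈ U' ∪ ⋃ n, f n '' U', ∀ t ∈ Icc (0:ℝ) 1, r x t ∈ U' ∪ ⋃ n, f n '' U') ∧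
      (∀ x ∈ U' ∪ ⋃ n, f n '' U', r x 1 = x) ∧
      (∀ x ∈ U' ∪ ⋃ n, f n '' U', r x 0 = p) ∧
      (∀ x ∈ U', ∀ t ∈ Icc (0:ℝ) 1, r x t = r' x t) ∧
      (∀ (n : ℕ), ∀ x ∈ U', ∀ t ∈ Icc (0:ℝ) 1, r (f n x) t = f n (r' x t)) := by
  classical
  haveI : Nonempty X := ⟨p⟩
  obtain ⟨V, hVopen, hVU⟩ := hU'open
  have hpYinf : p ∈ Yinf := hP hpP
  have hfp : ∀ n, f n p = p := fun n => (hfixP n p hpYinf).mpr hpP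
  have hfcont : ∀ n, ContinuousOn (f n) Yinf := fun n =>
    continuousOn_iff_continuous_restrict.mpr (hembed n).continuous
  have hYnComp : ∀ n, IsCompact (Y n) := fun n =>
    (hmaps n).image_eq ▸ hYinfCompact.image_of_continuousOn (hfcont n)
  set φ : ℕ → X → X := fun n => Function.invFunOn (f n) Yinf with hφdef
  have hφ1 : ∀ n, ∀ x ∈ Yinf, φ n (f n x) = x := fun n x hx =>
    (hmaps n).injOn.leftInvOn_invFunOn hx
  have hU'V : U' ⊆ V := fun x hx => (hVU ▸ hx : x ∈ V ∩ Yinf).1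
  have hVYU : ∀ x, x ∈ V → x ∈ Yinf → x ∈ U' := fun x h1 h2 => hVU ▸ (⟨h1, h2⟩ : x ∈ V ∩ Yinf)
  -- continuity of the layer inverses
  have hφcont : ∀ n, ContinuousOn (φ n) (Y n) := by
    intro n
    haveI : CompactSpace ↥Yinf := isCompact_iff_compactSpace.mp hYinfCompact
    set g : ↥Yinf → ↥(Y n) := fun x => ⟨f n x, (hmaps n).mapsTo x.2⟩ with hg
    have hgbij : Function.Bijective g := by
      constructor
      · intro a b hab
        exact Subtype.ext ((hmaps n).injOn a.2 b.2 (congrArg Subtype.val hab))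
      · intro y
        obtain ⟨x, hx, hxy⟩ := (hmaps n).surjOn y.2
        exact ⟨⟨x, hx⟩, Subtype.ext hxy⟩
    have hgcont : Continuous g := Continuous.subtype_mk (hembed n).continuous _
    let e : ↥Yinf ≃ₜ ↥(Y n) :=
      Continuous.homeoOfEquivCompactToT2 (f := Equiv.ofBijective g hgbij) hgcont
    rw [continuousOn_iff_continuous_restrict]
    have hre : (Y n).restrict (φ n) = fun y => ((e.symm y : ↥Yinf) : X) := by
      funext y
      have h1 : g (e.symm y) = y := e.apply_symm_apply y
      have h2 : f n ((e.symm y : ↥Yinf) : X) = (y : X) := congrArg Subtype.val h1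
      have h3 : ((e.symm y : ↥Yinf) : X) ∈ Yinf := (e.symm y).2
      have hex : ∃ a ∈ Yinf, f n a = (y : X) := ⟨_, h3, h2⟩
      exact (hmaps n).injOn (Function.invFunOn_mem hex) h3
        ((Function.invFunOn_eq hex).trans h2.symm)
    rw [show (Y n).domRestrict (φ n) = (Y n).restrict (φ n) from rfl, hre]
    exact continuous_subtype_val.comp e.symm.continuous
  -- separation facts
  have hUP : ∀ x ∈ U', x ≠ p → x ∉ (P : Set X) := by
    intro x hx hne hxP
    have : x ∈ ((P : Set X) ∩ U') := ⟨hxP, hx⟩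
    rw [hU'P] at this
    exact hne this
  have hinYinf : ∀ n, ∀ x ∈ Yinf, f n x ∈ Yinf → x ∈ (P : Set X) ∧ f n x = x := by
    intro n x hx hfx
    by_cases hxP : x ∈ (P : Set X)
    · exact ⟨hxP, (hfixP n x hx).mpr hxP⟩
    · exact absurd rfl (hdisj1 n x hx hxP _ hfx)
  have huniq : ∀ n m, ∀ x ∈ Yinf, x ∉ (P : Set X) → ∀ y ∈ Yinf,
      f n x = f m y → n = m ∧ x = y := by
    intro n m x hx hxP y hy heq
    rcases eq_or_ne n m with rfl | hne
    · exact ⟨rfl, (hmaps n).injOn hx hy heq⟩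
    · exact absurd heq (hdisj2 n m hne x hx hxP y hy)
  have hlayer_notYinf : ∀ n, ∀ x0 ∈ U', x0 ≠ p → f n x0 ∉ Yinf := fun n x0 h0 hne hmem =>
    hdisj1 n x0 (hU'sub h0) (hUP x0 h0 hne) _ hmem rfl
  set Uu : Set X := U' ∪ ⋃ n, f n '' U' with hUu
  have hdecomp : ∀ q ∈ Uu, q ∈ U' ∨ ∃ m, ∃ x0 ∈ U', x0 ≠ p ∧ q = f m x0 := by
    intro q hq
    rcases hq with h | h
    · exact Or.inl h
    · obtain ⟨m, hm⟩ := mem_iUnion.mp h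
      obtain ⟨x0, hx0, rfl⟩ := hm
      by_cases h0 : x0 = p
      · subst h0
        rw [hfp m]
        exact Or.inl hpU'
      · exact Or.inr ⟨m, x0, hx0, h0, rfl⟩
  -- avoidance of the "bad" closed set
  have havoid : ∀ N : ℕ, ∀ q ∈ Uu, ∃ ε > 0, ∀ z, dist z q < ε →
      (z ∈ Yinf → z ∈ U') ∧ (∀ n < N, ∀ x ∈ Yinf, f n x = z → x ∈ U') := by
    intro N q hq
    set C : Set X := Yinf ∩ Vᶜ with hC
    have hCclosed : IsClosed C := hYinfClosed.inter (isClosed_compl_iff.mpr hVopen)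
    have hCcomp : IsCompact C := hYinfCompact.inter_right (isClosed_compl_iff.mpr hVopen)
    set T : Set X := C ∪ ⋃ n : Fin N, f n '' C with hT
    have hTclosed : IsClosed T := by
      apply IsClosed.union hCclosed
      exact isClosed_iUnion_of_finite fun n =>
        (hCcomp.image_of_continuousOn ((hfcont n).mono inter_subset_left)).isClosed
    have hqT : q ∉ T := by
      intro hT
      rcases hdecomp q hq with hqU | ⟨m, x0, hx0, hx0ne, rfl⟩
      · rcases hT with ⟨hqY, hqV⟩ | hT
        · exact hqV (hU'V hqU)
        · obtain ⟨⟨n, hn⟩, x, ⟨hx, hxV⟩, hfx⟩ := mem_iUnion.mp hT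
          have h2 := hinYinf n x hx (hfx ▸ hU'sub hqU)
          have hxq : x = q := h2.2.symm.trans hfx
          exact hxV (hxq ▸ hU'V hqU)
      · have hqnY : f m x0 ∉ Yinf := hlayer_notYinf m x0 hx0 hx0ne
        rcases hT with ⟨hqY, _⟩ | hT
        · exact hqnY hqY
        · obtain ⟨⟨n, hn⟩, x, ⟨hx, hxV⟩, hfx⟩ := mem_iUnion.mp hT
          by_cases hxP : x ∈ (P : Set X)
          · have hfix : f n x = x := (hfixP n x hx).mpr hxP
            exact hqnY ((hfix.symm.trans hfx) ▸ hx)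
          · obtain ⟨-, hxx0⟩ := huniq n m x hx hxP x0 (hU'sub hx0) hfx
            exact hxV (hxx0 ▸ hU'V hx0)
    obtain ⟨ε, hε, hball⟩ := Metric.isOpen_iff.mp hTclosed.isOpen_compl q hqT
    refine ⟨ε, hε, fun z hz => ?_⟩
    have hzT : z ∉ T := hball (Metric.mem_ball.mpr hz)
    constructor
    · intro hzY
      by_contra hzU
      exact hzT (Or.inl ⟨hzY, fun hzV => hzU (hVYU z hzV hzY)⟩)
    · intro n hn x hx hfx
      by_contra hxU
      exact hzT (Or.inr (mem_iUnion.mpr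
        ⟨⟨n, hn⟩, ⟨x, ⟨hx, fun hxV => hxU (hVYU x hxV hx)⟩, hfx⟩⟩))
  -- openness of Uu
  have hUopen : IsOpen Uu := by
    rw [Metric.isOpen_iff]
    intro q hq
    rcases hdecomp q hq with hqU | ⟨m, x0, hx0, hx0ne, rfl⟩
    · obtain ⟨δ, hδpos, hδ⟩ := Metric.isOpen_iff.mp hVopen q (hU'V hqU)
      obtain ⟨N, hN⟩ := hunif (δ/2) (half_pos hδpos)
      obtain ⟨ε1, hε1, hav⟩ := havoid N q hq
      refine ⟨min ε1 (δ/2), lt_min hε1 (half_pos hδpos), fun z hz => ?_⟩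
      rw [Metric.mem_ball] at hz
      have hz1 : dist z q < ε1 := hz.trans_le (min_le_left _ _)
      have hz2 : dist z q < δ/2 := hz.trans_le (min_le_right _ _)
      have hzU : z ∈ Yinf ∪ ⋃ n, Y n := by rw [hcover]; exact mem_univ z
      rcases hzU with hzY | hzL
      · exact Or.inl ((hav z hz1).1 hzY)
      · obtain ⟨n, hn⟩ := mem_iUnion.mp hzL
        obtain ⟨x, hx, hfx⟩ := (hmaps n).surjOn hn
        by_cases hnN : n < N
        · exact Or.inr (mem_iUnion.mpr ⟨n, x, (hav z hz1).2 n hnN x hx hfx, hfx⟩)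
        · have hd : dist (f n x) x < δ/2 := hN n (le_of_not_gt hnN) x hx
          have hxq : dist x q < δ := by
            calc dist x q ≤ dist x (f n x) + dist (f n x) q := dist_triangle _ _ _
              _ < δ/2 + δ/2 := add_lt_add (dist_comm (f n x) x ▸ hd)
                  (by rw [hfx]; exact hz2)
              _ = δ := add_halves δ
          have hxU : x ∈ U' := hVYU x (hδ (Metric.mem_ball.mpr hxq)) hx
          exact Or.inr (mem_iUnion.mpr ⟨n, x, hxU, hfx⟩)
    · have hxnY : f m x0 ∉ Yinf := hlayer_notYinf m x0 hx0 hx0ne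
      obtain ⟨ε0, hε0, hball0⟩ := Metric.isOpen_iff.mp hYinfClosed.isOpen_compl _ hxnY
      obtain ⟨N, hN⟩ := hunif (ε0/2) (half_pos hε0)
      obtain ⟨ε1, hε1, hav⟩ := havoid N _ hq
      refine ⟨min ε1 (ε0/2), lt_min hε1 (half_pos hε0), fun z hz => ?_⟩
      rw [Metric.mem_ball] at hz
      have hz1 : dist z (f m x0) < ε1 := hz.trans_le (min_le_left _ _)
      have hz2 : dist z (f m x0) < ε0/2 := hz.trans_le (min_le_right _ _)
      have hzU : z ∈ Yinf ∪ ⋃ n, Y n := by rw [hcover]; exact mem_univ z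
      rcases hzU with hzY | hzL
      · exact absurd hzY (hball0 (Metric.mem_ball.mpr (hz2.trans (half_lt_self hε0))))
      · obtain ⟨n, hn⟩ := mem_iUnion.mp hzL
        obtain ⟨x, hx, hfx⟩ := (hmaps n).surjOn hn
        by_cases hnN : n < N
        · exact Or.inr (mem_iUnion.mpr ⟨n, x, (hav z hz1).2 n hnN x hx hfx, hfx⟩)
        · exfalso
          have hd : dist (f n x) x < ε0/2 := hN n (le_of_not_gt hnN) x hx
          have : dist x (f m x0) < ε0 := by
            calc dist x (f m x0) ≤ dist x (f n x) + dist (f n x) (f m x0) := dist_triangle _ _ _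
              _ < ε0/2 + ε0/2 := add_lt_add (dist_comm (f n x) x ▸ hd)
                  (by rw [hfx]; exact hz2)
              _ = ε0 := add_halves ε0
          exact hball0 (Metric.mem_ball.mpr this) hx
  -- evaluation lemmas for myR
  have hrU' : ∀ x ∈ U', ∀ t : ℝ, myR f Yinf U' r' p x t = r' x t := by
    intro x hx t
    simp only [myR, if_pos hx]
  have hrLayer : ∀ (n : ℕ), ∀ x ∈ U', ∀ t ∈ Icc (0:ℝ) 1,
      myR f Yinf U' r' p (f n x) t = f n (r' x t) := by
    intro n x hx t ht
    by_cases hmem : f n x ∈ U'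
    · have h2 := hinYinf n x (hU'sub hx) (hU'sub hmem)
      have hxp : x = p := by
        have : x ∈ ((P : Set X) ∩ U') := ⟨h2.1, hx⟩
        rw [hU'P] at this
        exact this
      rw [hxp, hr'p t ht, hfp n, hrU' p hpU', hr'p t ht]
    · have hx0ne : x ≠ p := by
        rintro rfl
        rw [hfp n] at hmem
        exact hmem hpU'
      have hxP : x ∉ (P : Set X) := hUP x hx hx0ne
      have hex : ∃ k, f n x ∈ f k '' U' := ⟨n, x, hx, rfl⟩
      simp only [myR, if_neg hmem, dif_pos hex]
      obtain ⟨y, hy, hfy⟩ := hex.choose_spec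
      have hyP : y ∉ (P : Set X) := by
        intro hyP
        have hfix : f hex.choose y = y := (hfixP _ y (hP hyP)).mpr hyP
        exact hdisj1 n x (hU'sub hx) hxP y (hP hyP) (hfy.symm.trans hfix)
      obtain ⟨hkn, hyx⟩ := huniq hex.choose n y (hU'sub hy) hyP x (hU'sub hx) hfy
      rw [hkn]
      rw [show (Function.invFunOn (f n) Yinf (f n x)) = x from hφ1 n x (hU'sub hx)]
  -- the remaining range/endpoint properties
  have hrmem : ∀ x ∈ Uu, ∀ t ∈ Icc (0:ℝ) 1, myR f Yinf U' r' p x t ∈ Uu := by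
    intro x hx t ht
    rcases hx with hxU | hxL
    · rw [hrU' x hxU t]
      exact Or.inl (hr'into x hxU t ht)
    · obtain ⟨n, y, hy, rfl⟩ := mem_iUnion.mp hxL
      rw [hrLayer n y hy t ht]
      exact Or.inr (mem_iUnion.mpr ⟨n, r' y t, hr'into y hy t ht, rfl⟩)
  have h1mem : (1:ℝ) ∈ Icc (0:ℝ) 1 := ⟨zero_le_one, le_refl 1⟩
  have h0mem : (0:ℝ) ∈ Icc (0:ℝ) 1 := ⟨le_refl 0, zero_le_one⟩
  have hrone : ∀ x ∈ Uu, myR f Yinf U' r' p x 1 = x := by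
    intro x hx
    rcases hx with hxU | hxL
    · rw [hrU' x hxU 1, hr'one x hxU]
    · obtain ⟨n, y, hy, rfl⟩ := mem_iUnion.mp hxL
      rw [hrLayer n y hy 1 h1mem, hr'one y hy]
  have hrzero : ∀ x ∈ Uu, myR f Yinf U' r' p x 0 = p := by
    intro x hx
    rcases hx with hxU | hxL
    · rw [hrU' x hxU 0, hr'zero x hxU]
    · obtain ⟨n, y, hy, rfl⟩ := mem_iUnion.mp hxL
      rw [hrLayer n y hy 0 h0mem, hr'zero y hy, hfp n]
  -- layer maps G n and their continuity
  have hlsub : ∀ n, f n '' U' ⊆ Y n := by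
    intro n z hz
    obtain ⟨y, hy, rfl⟩ := hz
    exact (hmaps n).mapsTo (hU'sub hy)
  have hφU' : ∀ n, ∀ z ∈ f n '' U', φ n z ∈ U' := by
    intro n z hz
    obtain ⟨y, hy, rfl⟩ := hz
    rw [hφ1 n y (hU'sub hy)]
    exact hy
  have hG : ∀ n, ContinuousOn (fun q : X × ℝ => f n (r' (φ n q.1) q.2))
      ((f n '' U') ×ˢ Icc (0:ℝ) 1) := by
    intro n
    have h1 : ContinuousOn (fun q : X × ℝ => (φ n q.1, q.2)) ((f n '' U') ×ˢ Icc (0:ℝ) 1) :=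
      ContinuousOn.prodMk ((hφcont n).comp continuousOn_fst (fun q hq => hlsub n hq.1))
        continuousOn_snd
    have h2 : ContinuousOn (fun q : X × ℝ => r' (φ n q.1) q.2)
        ((f n '' U') ×ˢ Icc (0:ℝ) 1) := by
      have := hr'cont.comp h1 (fun q hq => Set.mk_mem_prod (hφU' n q.1 hq.1) hq.2)
      exact this
    have h3 := (hfcont n).comp h2
      (fun q hq => hU'sub (hr'into (φ n q.1) (hφU' n q.1 hq.1) q.2 hq.2))
    exact h3
  have hFG : ∀ n, ∀ z ∈ f n '' U', ∀ s ∈ Icc (0:ℝ) 1,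
      myR f Yinf U' r' p z s = f n (r' (φ n z) s) := by
    intro n z hz s hs
    obtain ⟨y, hy, rfl⟩ := hz
    rw [hφ1 n y (hU'sub hy)]
    exact hrLayer n y hy s hs
  -- continuity of myR
  have hrcont : ContinuousOn (fun q : X × ℝ => myR f Yinf U' r' p q.1 q.2)
      (Uu ×ˢ Icc (0:ℝ) 1) := by
    intro q hq
    obtain ⟨x, t⟩ := q
    have hx : x ∈ Uu := hq.1
    have ht : t ∈ Icc (0:ℝ) 1 := hq.2
    rw [cwa_prod_iff]
    intro ε hε
    rcases hdecomp x hx with hxU' | ⟨m, x0, hx0, hx0ne, rfl⟩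
    · -- x ∈ U'
      obtain ⟨δ', hδ'pos, hδ'⟩ :=
        cwa_prod_iff.mp (hr'cont (x, t) (Set.mk_mem_prod hxU' ht)) (ε/2) (half_pos hε)
      obtain ⟨N, hN⟩ := hunif (min (ε/2) (δ'/2)) (lt_min (half_pos hε) (half_pos hδ'pos))
      have hsmall : ∀ n < N, ∃ δ > 0, ∀ z ∈ f n '' U', ∀ s ∈ Icc (0:ℝ) 1,
          dist z x < δ → dist s t < δ →
          dist (myR f Yinf U' r' p z s) (r' x t) < ε := by
        intro n hn
        by_cases hxp : x = p
        · rw [hxp]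
          have hpl : p ∈ f n '' U' := ⟨p, hpU', hfp n⟩
          obtain ⟨δ, hδpos, hδ⟩ :=
            cwa_prod_iff.mp (hG n (p, t) (Set.mk_mem_prod hpl ht)) ε hε
          refine ⟨δ, hδpos, fun z hz s hs h1 h2 => ?_⟩
          have hd := hδ z hz s hs h1 h2
          have e1 : φ n p = p := by
            have h := hφ1 n p hpYinf
            rw [hfp n] at h
            exact h
          rw [e1, hr'p t ht, hfp n] at hd
          rw [hFG n z hz s hs, hr'p t ht]
          exact hd
        · have hxYn : x ∉ Y n := by
            intro hxY
            obtain ⟨y, hy, hfy⟩ := (hmaps n).surjOn hxY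
            have h2 := hinYinf n y hy (hfy ▸ hU'sub hxU')
            have hyx : y = x := h2.2.symm.trans hfy
            apply hxp
            have : y ∈ ((P : Set X) ∩ U') := ⟨h2.1, hyx ▸ hxU'⟩
            rw [hU'P] at this
            exact hyx ▸ this
          obtain ⟨δ, hδpos, hball⟩ :=
            Metric.isOpen_iff.mp (hYnComp n).isClosed.isOpen_compl x hxYn
          exact ⟨δ, hδpos, fun z hz s hs h1 h2 =>
            absurd (hlsub n hz) (hball (Metric.mem_ball.mpr h1))⟩
      obtain ⟨δs, hδspos, hδs⟩ := exists_pos_forall_of_lt N _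
        (fun n δ δ'' hle hQ z hz s hs h1 h2 =>
          hQ z hz s hs (h1.trans_le hle) (h2.trans_le hle)) hsmall
      refine ⟨min δs (δ'/2), lt_min hδspos (half_pos hδ'pos), ?_⟩
      intro z hz s hs h1 h2
      have h2' : dist s t < δ' := (h2.trans_le (min_le_right _ _)).trans (half_lt_self hδ'pos)
      simp only
      rw [hrU' x hxU' t]
      rcases hz with hzU' | hzL
      · rw [hrU' z hzU' s]
        have h1' : dist z x < δ' := (h1.trans_le (min_le_right _ _)).trans (half_lt_self hδ'pos)
        exact (hδ' z hzU' s hs h1' h2').trans (half_lt_self hε)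
      · obtain ⟨n, hn⟩ := mem_iUnion.mp hzL
        by_cases hnN : n < N
        · exact hδs n hnN z hn s hs (h1.trans_le (min_le_left _ _))
            (h2.trans_le (min_le_left _ _))
        · obtain ⟨y, hy, rfl⟩ := hn
          rw [hrLayer n y hy s hs]
          have hyY := hU'sub hy
          have hd1 : dist (f n y) y < min (ε/2) (δ'/2) := hN n (le_of_not_gt hnN) y hyY
          have hyx : dist y x < δ' := by
            calc dist y x ≤ dist y (f n y) + dist (f n y) x := dist_triangle _ _ _
              _ < δ'/2 + δ'/2 :=
                add_lt_add ((dist_comm (f n y) y ▸ hd1).trans_le (min_le_right _ _))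
                  (h1.trans_le (min_le_right _ _))
              _ = δ' := add_halves δ'
          have hw := hδ' y hy s hs hyx h2'
          have hwY : r' y s ∈ Yinf := hU'sub (hr'into y hy s hs)
          have hd2 : dist (f n (r' y s)) (r' y s) < min (ε/2) (δ'/2) :=
            hN n (le_of_not_gt hnN) _ hwY
          calc dist (f n (r' y s)) (r' x t)
              ≤ dist (f n (r' y s)) (r' y s) + dist (r' y s) (r' x t) := dist_triangle _ _ _
            _ < ε/2 + ε/2 := add_lt_add (hd2.trans_le (min_le_left _ _)) hw
            _ = ε := add_halves ε
    · -- x = f m x0, x0 ≠ p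
      have hxnY : f m x0 ∉ Yinf := hlayer_notYinf m x0 hx0 hx0ne
      obtain ⟨ε0, hε0, hball0⟩ := Metric.isOpen_iff.mp hYinfClosed.isOpen_compl _ hxnY
      obtain ⟨N, hN⟩ := hunif (ε0/2) (half_pos hε0)
      set N' := max N (m+1) with hN'
      have hsmall : ∀ n < N', ∃ δ > 0, ∀ z ∈ f n '' U', ∀ s ∈ Icc (0:ℝ) 1,
          dist z (f m x0) < δ → dist s t < δ →
          dist (myR f Yinf U' r' p z s) (myR f Yinf U' r' p (f m x0) t) < ε := by
        intro n hn
        by_cases hnm : n = m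
        · subst hnm
          have hxl : f n x0 ∈ f n '' U' := ⟨x0, hx0, rfl⟩
          obtain ⟨δ, hδpos, hδ⟩ :=
            cwa_prod_iff.mp (hG n (f n x0, t) (Set.mk_mem_prod hxl ht)) ε hε
          refine ⟨δ, hδpos, fun z hz s hs h1 h2 => ?_⟩
          have h3 := hδ z hz s hs h1 h2
          rw [hFG n z hz s hs, hFG n (f n x0) hxl t ht]
          exact h3
        · have hxYn : f m x0 ∉ Y n := by
            intro hxY
            obtain ⟨y, hy, hfy⟩ := (hmaps n).surjOn hxY
            by_cases hyP : y ∈ (P : Set X)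
            · have hfix : f n y = y := (hfixP n y hy).mpr hyP
              exact hxnY ((hfix.symm.trans hfy) ▸ hy)
            · exact hdisj2 n m hnm y hy hyP x0 (hU'sub hx0) hfy
          obtain ⟨δ, hδpos, hball⟩ :=
            Metric.isOpen_iff.mp (hYnComp n).isClosed.isOpen_compl _ hxYn
          exact ⟨δ, hδpos, fun z hz s hs h1 h2 =>
            absurd (hlsub n hz)
              (by
                have : dist (f m x0) z < δ := dist_comm z (f m x0) ▸ h1
                exact fun hzY => hball (Metric.mem_ball.mpr h1) hzY)⟩
      obtain ⟨δs, hδspos, hδs⟩ := exists_pos_forall_of_lt N' _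
        (fun n δ δ'' hle hQ z hz s hs h1 h2 =>
          hQ z hz s hs (h1.trans_le hle) (h2.trans_le hle)) hsmall
      refine ⟨min δs (ε0/2), lt_min hδspos (half_pos hε0), ?_⟩
      intro z hz s hs h1 h2
      simp only
      rcases hz with hzU' | hzL
      · exfalso
        have : dist z (f m x0) < ε0 :=
          (h1.trans_le (min_le_right _ _)).trans (half_lt_self hε0)
        exact hball0 (Metric.mem_ball.mpr this) (hU'sub hzU')
      · obtain ⟨n, hn⟩ := mem_iUnion.mp hzL
        by_cases hnN : n < N'
        · exact hδs n hnN z hn s hs (h1.trans_le (min_le_left _ _))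
            (h2.trans_le (min_le_left _ _))
        · exfalso
          obtain ⟨y, hy, rfl⟩ := hn
          have hnge : n ≥ N := le_trans (le_max_left N (m+1)) (le_of_not_gt hnN)
          have hd := hN n hnge y (hU'sub hy)
          have : dist y (f m x0) < ε0 := by
            calc dist y (f m x0) ≤ dist y (f n y) + dist (f n y) (f m x0) := dist_triangle _ _ _
              _ < ε0/2 + ε0/2 := add_lt_add (dist_comm (f n y) y ▸ hd)
                  (h1.trans_le (min_le_right _ _))
              _ = ε0 := add_halves ε0
          exact hball0 (Metric.mem_ball.mpr this) (hU'sub hy)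
  exact ⟨Or.inl hpU', hUopen, myR f Yinf U' r' p, hrcont, hrmem, hrone, hrzero,
    fun x hx t _ => hrU' x hx t, hrLayer⟩
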